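/- Fix real numbers p₁ < 1, d₂ > 0 and b < x₃ < x₄ < ∞. There exist c₀ < ∞ and n₀ < ∞ such that for every c ≥ c₀ and every integer n ≥ n₀, the random configuration built from n i.i.d. exponential(c) variables satisfies P( d([x₃, x₄]) ≤ d₂ ) ≥ p₁. (Second half of Theorem 2.1 of the paper, reduced to a fixed time via pseudo-stationarity.) -/

import Mathlib

open MeasureTheory ProbabilityTheory
open scoped ENNReal NNReal

lemma expMeasure_Iic_aux {c : ℝ} (hc : 0 < c) (t : ℝ) :
    expMeasure c (Set.Iic t) = ∫⁻ y in Set.Iic t, exponentialPDF c y := by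
  rw [expMeasure, gammaMeasure, withDensity_apply _ measurableSet_Iic]
  rfl

lemma expMeasure_Ioi (c t : ℝ) (hc : 0 < c) (ht : 0 ≤ t) :
    expMeasure c (Set.Ioi t) = ENNReal.ofReal (Real.exp (-(c * t))) := by
  have hprob : IsProbabilityMeasure (expMeasure c) := isProbabilityMeasure_expMeasure hc
  have hIic : expMeasure c (Set.Iic t) = ENNReal.ofReal (1 - Real.exp (-(c * t))) := by
    rw [expMeasure_Iic_aux hc, lintegral_exponentialPDF_eq_antiDeriv hc, if_pos ht]
  have hexp1 : Real.exp (-(c * t)) ≤ 1 := by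
    rw [Real.exp_le_one_iff]; nlinarith
  rw [← Set.compl_Iic, measure_compl measurableSet_Iic (measure_ne_top _ _), measure_univ, hIic,
    ← ENNReal.ofReal_one, ← ENNReal.ofReal_sub _ (by linarith)]
  norm_num

/-- Second half of Theorem 2.1 (at a fixed time, via pseudo-stationarity): for
`p₁ < 1`, `d₂ > 0`, `b < x₃ < x₄ < ∞`, there exist `c₀` and `n₀` such that for every
`c ≥ c₀` and every `n ≥ n₀`, the configuration of `n` intervals of length `ε = b/n`
whose centers are `X^k = Y^k + (k−1)ε + ε/2` (with `Y` the nondecreasing rearrangement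
of `n` i.i.d. exponential(`c`) variables `Z`) satisfies
`P( d([x₃, x₄]) ≤ d₂ ) ≥ p₁`, where
`d([u, w]) = λ([u, w] ∩ ⋃_k I^k)/(w − u)` and `I^k = (X^k − ε/2, X^k + ε/2)`.
(Indices are `0`-based, so `X_k = Y_k + kε + ε/2` and `I^k = (Y_k + kε, Y_k + kε + ε)`.) -/
theorem crowding_density_low_right (p₁ d₂ b x₃ x₄ : ℝ) (hb : 0 < b)
    (hp₁ : p₁ < 1) (hd₂ : 0 < d₂) (hbx₃ : b < x₃) (hx₃₄ : x₃ < x₄) :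
    ∃ (c₀ : ℝ) (n₀ : ℕ), ∀ c : ℝ, c₀ ≤ c → ∀ n : ℕ, n₀ ≤ n → 1 ≤ n →
      ∀ (Ω : Type) [MeasurableSpace Ω] (μ : Measure Ω), IsProbabilityMeasure μ →
        ∀ Z Y : Fin n → Ω → ℝ,
          iIndepFun Z μ →
          (∀ k, Measure.map (Z k) μ = expMeasure c) →
          (∀ ω : Ω, ∃ π : Equiv.Perm (Fin n),
            (∀ k, Y k ω = Z (π k) ω) ∧ Monotone fun k => Y k ω) →
          ENNReal.ofReal p₁ ≤
            μ {ω : Ω |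
              (volume (Set.Icc x₃ x₄ ∩
                  ⋃ k : Fin n,
                    Set.Ioo (Y k ω + k * (b / n)) (Y k ω + k * (b / n) + b / n))).toReal
                / (x₄ - x₃) ≤ d₂} := by
  set t : ℝ := x₃ - b with ht_def
  have ht : 0 < t := by simp [ht_def]; linarith
  set δ : ℝ := d₂ * (x₄ - x₃) / b with hδ_def
  have hx : 0 < x₄ - x₃ := by linarith
  have hδ : 0 < δ := by positivity
  set s : ℝ := (1 - p₁) * δ with hs_def
  have hs : 0 < s := by
    apply mul_pos (by linarith) hδ
  refine ⟨max 1 (-Real.log s / t), 1, fun c hc n hn hn1 Ω _ μ hμ Z Y _ hZmap hY => ?_⟩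
  have hc1 : (1 : ℝ) ≤ c := le_trans (le_max_left _ _) hc
  have hc0 : 0 < c := by linarith
  have hexp_le : Real.exp (-(c * t)) ≤ s := by
    have h1 : -Real.log s / t ≤ c := le_trans (le_max_right _ _) hc
    have h2 : -Real.log s ≤ c * t := by
      rw [div_le_iff₀ ht] at h1; linarith
    calc Real.exp (-(c * t)) ≤ Real.exp (Real.log s) := Real.exp_le_exp.2 (by linarith)
      _ = s := Real.exp_log hs
  set ε : ℝ := b / n with hε_def
  have hnpos : (0 : ℝ) < n := by exact_mod_cast Nat.lt_of_lt_of_le Nat.zero_lt_one hn1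
  have hε : 0 < ε := by positivity
  -- the Z's are AEMeasurable
  have hprob : IsProbabilityMeasure (expMeasure c) := isProbabilityMeasure_expMeasure hc0
  have hZae : ∀ k, AEMeasurable (Z k) μ := by
    intro k
    by_contra h
    have := Measure.map_of_not_aemeasurable (μ := μ) h
    rw [hZmap k] at this
    have h1 : expMeasure c Set.univ = 1 := measure_univ
    rw [this] at h1
    simp at h1
  -- the counting function
  set g : ℝ → ℝ≥0∞ := (Set.Ioi t).indicator 1 with hg_def
  have hgmeas : Measurable g := measurable_one.indicator measurableSet_Ioi
  set f : Ω → ℝ≥0∞ := fun ω => ∑ k : Fin n, g (Z k ω) with hf_def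
  have hfae : AEMeasurable f μ :=
    Finset.aemeasurable_fun_sum _ fun k _ => hgmeas.comp_aemeasurable (hZae k)
  -- expectation of f
  have hint : ∫⁻ ω, f ω ∂μ = n * ENNReal.ofReal (Real.exp (-(c * t))) := by
    have h1 : ∫⁻ ω, ∑ k : Fin n, g (Z k ω) ∂μ = ∑ k : Fin n, ∫⁻ ω, g (Z k ω) ∂μ :=
      lintegral_finset_sum' _ fun k _ => hgmeas.comp_aemeasurable (hZae k)
    rw [hf_def, h1]
    have : ∀ k : Fin n, ∫⁻ ω, g (Z k ω) ∂μ = ENNReal.ofReal (Real.exp (-(c * t))) := by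
      intro k
      rw [← lintegral_map' (hgmeas.aemeasurable) (hZae k), hZmap k, hg_def,
        lintegral_indicator_one measurableSet_Ioi, expMeasure_Ioi c t hc0 ht.le]
    simp [this, Finset.sum_const]
  -- pointwise bound on the volume
  have hbound : ∀ ω : Ω,
      volume (Set.Icc x₃ x₄ ∩ ⋃ k : Fin n,
        Set.Ioo (Y k ω + k * ε) (Y k ω + k * ε + ε)) ≤ ENNReal.ofReal ε * f ω := by
    intro ω
    obtain ⟨π, hπ, -⟩ := hY ω
    have step1 : volume (Set.Icc x₃ x₄ ∩ ⋃ k : Fin n,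
        Set.Ioo (Y k ω + k * ε) (Y k ω + k * ε + ε)) ≤
        ∑ k : Fin n, volume (Set.Icc x₃ x₄ ∩ Set.Ioo (Y k ω + k * ε) (Y k ω + k * ε + ε)) := by
      rw [Set.inter_iUnion]
      exact measure_iUnion_fintype_le _ _
    have step2 : ∀ k : Fin n,
        volume (Set.Icc x₃ x₄ ∩ Set.Ioo (Y k ω + k * ε) (Y k ω + k * ε + ε)) ≤
        ENNReal.ofReal ε * g (Y k ω) := by
      intro k
      by_cases h : Y k ω ∈ Set.Ioi t
      · rw [hg_def, Set.indicator_of_mem h]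
        simp only [Pi.one_apply, mul_one]
        calc volume (Set.Icc x₃ x₄ ∩ Set.Ioo (Y k ω + k * ε) (Y k ω + k * ε + ε))
            ≤ volume (Set.Ioo (Y k ω + k * ε) (Y k ω + k * ε + ε)) :=
              measure_mono Set.inter_subset_right
          _ = ENNReal.ofReal ε := by rw [Real.volume_Ioo]; ring_nf
      · rw [hg_def, Set.indicator_of_notMem h, mul_zero]
        have hYle : Y k ω ≤ t := by simpa using h
        have hk1 : ((k : ℝ) + 1) * ε ≤ b := by
          have hkn : (k : ℝ) + 1 ≤ n := by exact_mod_cast k.isLt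
          have : ((k : ℝ) + 1) * ε ≤ n * ε := by nlinarith
          rw [hε_def] at this ⊢
          calc ((k : ℝ) + 1) * (b / n) ≤ n * (b / n) := this
            _ = b := by field_simp
        have hempty : Set.Icc x₃ x₄ ∩ Set.Ioo (Y k ω + k * ε) (Y k ω + k * ε + ε) = ∅ := by
          ext x
          simp only [Set.mem_inter_iff, Set.mem_Icc, Set.mem_Ioo, Set.mem_empty_iff_false,
            iff_false, not_and, and_imp]
          intro h1 _ _ h4
          have : Y k ω + k * ε + ε ≤ t + b := by nlinarith
          simp [ht_def] at this
          linarith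
        rw [hempty]
        simp
    calc volume (Set.Icc x₃ x₄ ∩ ⋃ k : Fin n,
          Set.Ioo (Y k ω + k * ε) (Y k ω + k * ε + ε))
        ≤ ∑ k : Fin n, volume (Set.Icc x₃ x₄ ∩ Set.Ioo (Y k ω + k * ε) (Y k ω + k * ε + ε)) :=
          step1
      _ ≤ ∑ k : Fin n, ENNReal.ofReal ε * g (Y k ω) := Finset.sum_le_sum fun k _ => step2 k
      _ = ENNReal.ofReal ε * ∑ k : Fin n, g (Y k ω) := by rw [Finset.mul_sum]
      _ = ENNReal.ofReal ε * f ω := by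
          congr 1
          rw [hf_def]
          calc ∑ k : Fin n, g (Y k ω) = ∑ k : Fin n, g (Z (π k) ω) := by
                exact Finset.sum_congr rfl fun k _ => by rw [hπ k]
            _ = ∑ k : Fin n, g (Z k ω) := Equiv.sum_comp π (fun k => g (Z k ω))
  -- the complement of the good event is contained in a Markov event
  set A : Set Ω := {ω : Ω |
      (volume (Set.Icc x₃ x₄ ∩
          ⋃ k : Fin n,
            Set.Ioo (Y k ω + k * (b / n)) (Y k ω + k * (b / n) + b / n))).toReal
        / (x₄ - x₃) ≤ d₂} with hA_def
  set L : ℝ≥0∞ := ENNReal.ofReal (δ * n) with hL_def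
  have hL0 : L ≠ 0 := by
    rw [hL_def]
    simp [ENNReal.ofReal_eq_zero, not_le]
    positivity
  have hLtop : L ≠ ⊤ := ENNReal.ofReal_ne_top
  have hcompl : Aᶜ ⊆ {ω : Ω | L ≤ f ω} := by
    intro ω hω
    simp only [hA_def, Set.mem_compl_iff, Set.mem_setOf_eq, not_le] at hω
    set V := volume (Set.Icc x₃ x₄ ∩
        ⋃ k : Fin n, Set.Ioo (Y k ω + k * (b / n)) (Y k ω + k * (b / n) + b / n)) with hV_def
    have hVtop : V ≠ ⊤ := by
      refine ne_top_of_le_ne_top ?_ (measure_mono Set.inter_subset_left)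
      rw [Real.volume_Icc]
      exact ENNReal.ofReal_ne_top
    have hd2lt : d₂ * (x₄ - x₃) < V.toReal := by
      rw [lt_div_iff₀ hx] at hω
      linarith [hω]
    have hVlt : ENNReal.ofReal (d₂ * (x₄ - x₃)) < V := by
      rw [← ENNReal.ofReal_toReal hVtop]
      exact (ENNReal.ofReal_lt_ofReal_iff (lt_trans (by positivity) hd2lt)).2 hd2lt
    have key : ENNReal.ofReal (d₂ * (x₄ - x₃)) < ENNReal.ofReal ε * f ω :=
      lt_of_lt_of_le hVlt (hbound ω)
    have heq : d₂ * (x₄ - x₃) = δ * n * ε := by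
      rw [hδ_def, hε_def]; field_simp
    rw [heq, ENNReal.ofReal_mul (by positivity)] at key
    have : L * ENNReal.ofReal ε < ENNReal.ofReal ε * f ω := key
    rw [mul_comm (ENNReal.ofReal ε) (f ω)] at this
    have hε0 : ENNReal.ofReal ε ≠ 0 := by
      simp [ENNReal.ofReal_eq_zero, not_le]; positivity
    simp only [Set.mem_setOf_eq]
    exact le_of_lt ((ENNReal.mul_lt_mul_iff_left hε0 ENNReal.ofReal_ne_top).1 this)
  -- Markov inequality
  have hmarkov : μ {ω : Ω | L ≤ f ω} ≤ ENNReal.ofReal (1 - p₁) := by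
    have h1 : L * μ {ω : Ω | L ≤ f ω} ≤ ∫⁻ ω, f ω ∂μ := mul_meas_ge_le_lintegral₀ hfae L
    rw [hint] at h1
    have h2 : (n : ℝ≥0∞) * ENNReal.ofReal (Real.exp (-(c * t))) ≤ ENNReal.ofReal (1 - p₁) * L := by
      rw [hL_def, ← ENNReal.ofReal_natCast n, ← ENNReal.ofReal_mul (by positivity),
        ← ENNReal.ofReal_mul (by linarith)]
      apply ENNReal.ofReal_le_ofReal
      have : (n : ℝ) * Real.exp (-(c * t)) ≤ (n : ℝ) * s := by nlinarith
      rw [hs_def] at this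
      nlinarith
    have h3 : L * μ {ω : Ω | L ≤ f ω} ≤ ENNReal.ofReal (1 - p₁) * L := le_trans h1 h2
    rw [mul_comm L (μ _)] at h3
    exact (ENNReal.mul_le_mul_iff_left hL0 hLtop).1 h3
    -- from a * L ≤ b * L conclude a ≤ b
  have hAc : μ Aᶜ ≤ ENNReal.ofReal (1 - p₁) := le_trans (measure_mono hcompl) hmarkov
  rcases le_or_gt p₁ 0 with hp0 | hp0
  · simp [ENNReal.ofReal_eq_zero.2 hp0]
  · have hsum : ENNReal.ofReal p₁ + ENNReal.ofReal (1 - p₁) = 1 := by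
      rw [← ENNReal.ofReal_add hp0.le (by linarith)]
      norm_num
    have huniv : (1 : ℝ≥0∞) ≤ μ A + μ Aᶜ := by
      have : μ Set.univ ≤ μ A + μ Aᶜ := by
        rw [← Set.union_compl_self A]
        exact measure_union_le A Aᶜ
      rwa [measure_univ] at this
    have h1 : (1 : ℝ≥0∞) ≤ μ A + ENNReal.ofReal (1 - p₁) := le_trans huniv (by
      exact add_le_add_right hAc (μ A))
    rw [← hsum] at h1
    exact (ENNReal.add_le_add_iff_right ENNReal.ofReal_ne_top).1 h1
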